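/- For n > k ≥ 0, the coefficient of x^n in x^k · C(x) · (1 + x/sqrt(1-4x)) equals ((n-k+3)/2)·C_{n-k}, where C_m is the m-th Catalan number; for n = k the coefficient is 1. -/

import Mathlib

open PowerSeries

/-- The Catalan generating function C(x) = Σ_{n≥0} C_n x^n. -/
noncomputable def catalanGF : PowerSeries ℚ := PowerSeries.mk fun n => (catalan n : ℚ)

/-- The series 1/sqrt(1-4x) = Σ_{n≥0} binom(2n,n) x^n. -/
noncomputable def invSqrtGF : PowerSeries ℚ := PowerSeries.mk fun n => ((2 * n).choose n : ℚ)

lemma sym_peak_key (n : ℕ) :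
    ∑ i ∈ Finset.range (n+1), (catalan i : ℚ) * ((2*(n - i)).choose (n-i) : ℕ)
      = ((n:ℚ) + 2) * catalan (n + 1) / 2 := by
  have hb : ∀ m : ℕ, (((2*m).choose m : ℕ) : ℚ) = ((m:ℚ)+1) * catalan m := by
    intro m
    have := succ_mul_catalan_eq_centralBinom m
    have h2 : ((m+1) * catalan m : ℕ) = (2*m).choose m := by
      rw [this]; rfl
    push_cast [← h2]; ring
  have hS : (2:ℚ) * ∑ i ∈ Finset.range (n+1), (catalan i : ℚ) * ((2*(n - i)).choose (n-i) : ℕ)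
      = ((n:ℚ)+2) * ∑ i ∈ Finset.range (n+1), (catalan i : ℚ) * catalan (n - i) := by
    have hrefl := Finset.sum_range_reflect
      (fun i => (catalan i : ℚ) * ((2*(n - i)).choose (n-i) : ℕ)) (n+1)
    rw [two_mul]
    nth_rewrite 2 [← hrefl]
    rw [← Finset.sum_add_distrib, Finset.mul_sum]
    apply Finset.sum_congr rfl
    intro i hi
    simp only [Finset.mem_range] at hi
    have hi' : i ≤ n := Nat.lt_succ_iff.mp hi
    have h1 : n + 1 - 1 - i = n - i := by omega
    have h2 : n - (n - i) = i := by omega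
    rw [h1, h2, hb, hb]
    have : ((n:ℚ) - i) = ((n - i : ℕ) : ℚ) := by
      push_cast [hi']; ring
    rw [← this]
    ring
  have hcat : (catalan (n+1) : ℚ) = ∑ i ∈ Finset.range (n+1), (catalan i : ℚ) * catalan (n - i) := by
    rw [catalan_succ']
    rw [Finset.Nat.sum_antidiagonal_eq_sum_range_succ (fun x y => catalan x * catalan y) n]
    push_cast
    rfl
  rw [← hcat] at hS
  linarith

lemma sym_peak_coeff (m : ℕ) :
    PowerSeries.coeff m (catalanGF * (1 + X * invSqrtGF))
      = (catalan m : ℚ) + if m = 0 then 0 else ((m:ℚ) + 1) * catalan m / 2 := by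
  rw [mul_add, mul_one, map_add]
  congr 1
  · simp [catalanGF]
  · have : catalanGF * (X * invSqrtGF) = X * (catalanGF * invSqrtGF) := by ring
    rw [this]
    rcases m with _ | m'
    · simp
    · rw [PowerSeries.coeff_succ_X_mul]
      simp only [Nat.succ_ne_zero, if_false]
      rw [PowerSeries.coeff_mul,
        Finset.Nat.sum_antidiagonal_eq_sum_range_succ
          (fun x y => (PowerSeries.coeff x catalanGF) * (PowerSeries.coeff y invSqrtGF)) m']
      simp only [catalanGF, invSqrtGF, PowerSeries.coeff_mk]
      rw [sym_peak_key m']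
      push_cast
      ring

/-- For n > k the coefficient of x^n in x^k·C(x)·(1 + x/sqrt(1-4x)) equals
((n-k+3)/2)·C_{n-k}; for n = k the coefficient is 1. -/
theorem coeff_sym_peak_gf (n k : ℕ) (h : k ≤ n) :
    (k < n →
      PowerSeries.coeff n ((X : PowerSeries ℚ) ^ k * catalanGF * (1 + X * invSqrtGF))
        = (((n : ℚ) - k + 3) / 2) * (catalan (n - k) : ℚ)) ∧
    (n = k →
      PowerSeries.coeff n ((X : PowerSeries ℚ) ^ k * catalanGF * (1 + X * invSqrtGF)) = 1) := by
  have hsplit : PowerSeries.coeff n ((X : PowerSeries ℚ) ^ k * catalanGF * (1 + X * invSqrtGF))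
      = PowerSeries.coeff (n - k) (catalanGF * (1 + X * invSqrtGF)) := by
    conv_lhs => rw [mul_assoc, show n = (n - k) + k from by omega]
    rw [PowerSeries.coeff_X_pow_mul]
  rw [hsplit, sym_peak_coeff]
  constructor
  · intro hlt
    have hm : n - k ≠ 0 := by omega
    rw [if_neg hm]
    have : (((n - k : ℕ)) : ℚ) = (n : ℚ) - k := by
      push_cast [h]; ring
    rw [this]
    ring
  · intro he
    subst he
    simp
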